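/- Let s ≥ s' (componentwise) be two starting values of the block magnetization chain. Then for every t ≥ 0 the vector of differences of expectations satisfies 0 ≤ (E_s[S_t^{(1)}] − E_{s'}[S_t^{(1)}], …, E_s[S_t^{(m)}] − E_{s'}[S_t^{(m)}])^T ≤ Q^t (s − s') componentwise, where Q = (1−1/n)I + (β/n)B. -/

import Mathlib

open Finset MeasureTheory Real Filter

namespace MultiIsing

/-- The real spin value attached to a Boolean spin. -/
def spin (b : Bool) : ℝ := if b then 1 else -1

/-- `r₊(s) = e^{βs}/(e^{βs}+e^{-βs})`. -/
noncomputable def rp (β s : ℝ) : ℝ :=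
  Real.exp (β * s) / (Real.exp (β * s) + Real.exp (-(β * s)))

/-- `r₋(s) = e^{-βs}/(e^{βs}+e^{-βs})`. -/
noncomputable def rm (β s : ℝ) : ℝ :=
  Real.exp (-(β * s)) / (Real.exp (β * s) + Real.exp (-(β * s)))

variable {m : ℕ}

/-- `g : Fin n → Fin m` realizes the partition of `n` vertices into groups
of sizes `n * p i`. -/
def IsPartition (n : ℕ) (p : Fin m → ℝ) (g : Fin n → Fin m) : Prop :=
  0 < n ∧ ∀ i, ((Finset.univ.filter fun v => g v = i).card : ℝ) = n * p i

/-- Standing hypotheses on the parameters of the multi-component Ising model. -/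
structure Params (m : ℕ) (p : Fin m → ℝ) (k : Fin m → Fin m → ℝ) : Prop where
  hm : 0 < m
  hp : ∀ i, 0 < p i
  hpsum : ∑ i, p i = 1
  hkpos : ∀ i j, 0 < k i j
  hksymm : ∀ i j, k i j = k j i

/-- `a` is the (normalized, positive) Perron–Frobenius left eigenvector of the
matrix `B = (p i * k i j)`; its eigenvalue is then necessarily
`∑ i j, a i * p i * k i j`. -/
structure PFvec (m : ℕ) (p : Fin m → ℝ) (k : Fin m → Fin m → ℝ) (a : Fin m → ℝ) : Prop where
  hpos : ∀ i, 0 < a i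
  hsum : ∑ i, a i = 1
  heig : ∀ j, ∑ i, a i * (p i * k i j) = (∑ i, ∑ j, a i * (p i * k i j)) * a j

/-- The critical inverse temperature `β_cr = 1 / (∑ i j, a i * p i * k i j)`. -/
noncomputable def betaCr (p : Fin m → ℝ) (k : Fin m → Fin m → ℝ) (a : Fin m → ℝ) : ℝ :=
  1 / (∑ i, ∑ j, a i * (p i * k i j))

/-- The mean field `S^v = ∑_{w ≠ v} K(v,w) σ(w)` at vertex `v`. -/
noncomputable def meanField (n : ℕ) (k : Fin m → Fin m → ℝ) (g : Fin n → Fin m)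
    (σ : Fin n → Bool) (v : Fin n) : ℝ :=
  ∑ w ∈ Finset.univ.filter (fun w => w ≠ v), (k (g v) (g w) / n) * spin (σ w)

/-- One-step transition probabilities of the Glauber dynamics: a uniformly chosen
vertex is refreshed to `±1` with probabilities `r±(S^v)`. -/
noncomputable def glauber (n : ℕ) (β : ℝ) (k : Fin m → Fin m → ℝ) (g : Fin n → Fin m)
    (σ σ' : Fin n → Bool) : ℝ :=
  (1 / n) * ∑ v,
    ((if σ' = Function.update σ v true then rp β (meanField n k g σ v) else 0)
      + (if σ' = Function.update σ v false then rm β (meanField n k g σ v) else 0))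

/-- `t`-step transition probabilities of a transition kernel on a finite state space. -/
noncomputable def iter {Ω : Type*} [Fintype Ω] [DecidableEq Ω] (P : Ω → Ω → ℝ) :
    ℕ → Ω → Ω → ℝ
  | 0 => fun x y => if x = y then 1 else 0
  | (t + 1) => fun x y => ∑ z, iter P t x z * P z y

/-- The Gibbs measure `μ_n(σ) ∝ exp(β ∑_{unordered pairs v ≠ w} K(v,w) σ(v) σ(w))`. -/
noncomputable def gibbs (n : ℕ) (β : ℝ) (k : Fin m → Fin m → ℝ) (g : Fin n → Fin m)
    (σ : Fin n → Bool) : ℝ :=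
  Real.exp (β * ((1 / 2) * ∑ v, ∑ w ∈ Finset.univ.filter (fun w => w ≠ v),
      (k (g v) (g w) / n) * spin (σ v) * spin (σ w))) /
    ∑ σ' : Fin n → Bool, Real.exp (β * ((1 / 2) * ∑ v, ∑ w ∈ Finset.univ.filter (fun w => w ≠ v),
      (k (g v) (g w) / n) * spin (σ' v) * spin (σ' w)))

/-- The total-variation distance between two distributions on a finite space. -/
noncomputable def tvDist {Ω : Type*} [Fintype Ω] (μ ν : Ω → ℝ) : ℝ :=
  (1 / 2) * ∑ x, |μ x - ν x|

/-- The worst-case total-variation distance to stationarity after `t` steps. -/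
noncomputable def dn (n : ℕ) (β : ℝ) (k : Fin m → Fin m → ℝ) (g : Fin n → Fin m)
    (t : ℕ) : ℝ :=
  ⨆ σ : Fin n → Bool, tvDist (fun σ' => iter (glauber n β k g) t σ σ') (gibbs n β k g)

/-- The total-variation mixing time `t_mix = min {t : d_n(t) ≤ 1/4}`. -/
noncomputable def tmix (n : ℕ) (β : ℝ) (k : Fin m → Fin m → ℝ) (g : Fin n → Fin m) : ℕ :=
  sInf {t : ℕ | dn n β k g t ≤ 1 / 4}

/-- The normalized block magnetization `S^{(i)}(σ) = (1/n) ∑_{v ∈ G_i} σ(v)`. -/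
noncomputable def Smag (n : ℕ) (g : Fin n → Fin m) (σ : Fin n → Bool) (i : Fin m) : ℝ :=
  (1 / n) * ∑ v ∈ Finset.univ.filter (fun v => g v = i), spin (σ v)

/-- The unnormalized block magnetization `M^{(i)}(σ) = ∑_{v ∈ G_i} σ(v)`. -/
noncomputable def Mvec (n : ℕ) (g : Fin n → Fin m) (σ : Fin n → Bool) (i : Fin m) : ℝ :=
  ∑ v ∈ Finset.univ.filter (fun v => g v = i), spin (σ v)

/-- The `i`-th block Hamming distance between two configurations. -/
noncomputable def blockDist (n : ℕ) (g : Fin n → Fin m) (σ σ' : Fin n → Bool) (i : Fin m) : ℝ :=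
  (1 / 2) * ∑ v ∈ Finset.univ.filter (fun v => g v = i), |spin (σ v) - spin (σ' v)|

/-- The matrix `Q = (1 - 1/n) I + (β/n) B` where `B = (p i * k i j)`. -/
noncomputable def Qmat (n : ℕ) (β : ℝ) (p : Fin m → ℝ) (k : Fin m → Fin m → ℝ) :
    Matrix (Fin m) (Fin m) ℝ :=
  (1 - 1 / (n : ℝ)) • (1 : Matrix (Fin m) (Fin m) ℝ) +
    (β / n) • Matrix.of (fun i j => p i * k i j)

/-- `μ` is the law of the Markov chain with transition probabilities `P`
started at `x0`, as a measure on path space. -/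
def IsPathMeasure {Ω : Type*} [Fintype Ω] [DecidableEq Ω] [MeasurableSpace Ω]
    (P : Ω → Ω → ℝ) (x0 : Ω) (μ : Measure (ℕ → Ω)) : Prop :=
  IsProbabilityMeasure μ ∧
    ∀ t : ℕ, ∀ f : ℕ → Ω,
      (μ {ω | ∀ s ≤ t, ω s = f s}).toReal =
        (if f 0 = x0 then ∏ s ∈ Finset.range t, P (f s) (f (s + 1)) else 0)

/-- `μ` is a coupling of two copies of the Markov chain with transition
probabilities `P`, started at `x0` and `y0` respectively. -/
def IsCoupling {Ω : Type*} [Fintype Ω] [DecidableEq Ω] [MeasurableSpace Ω]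
    (P : Ω → Ω → ℝ) (x0 y0 : Ω) (μ : Measure (ℕ → Ω × Ω)) : Prop :=
  IsProbabilityMeasure μ ∧
    (∀ t : ℕ, ∀ f : ℕ → Ω,
      (μ {ω | ∀ s ≤ t, (ω s).1 = f s}).toReal =
        (if f 0 = x0 then ∏ s ∈ Finset.range t, P (f s) (f (s + 1)) else 0)) ∧
    (∀ t : ℕ, ∀ f : ℕ → Ω,
      (μ {ω | ∀ s ≤ t, (ω s).2 = f s}).toReal =
        (if f 0 = y0 then ∏ s ∈ Finset.range t, P (f s) (f (s + 1)) else 0))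


/-- The expectation of `S_t^{(i)}` for the Glauber dynamics started at `σ`. -/
noncomputable def Eexp (n : ℕ) (β : ℝ) {m : ℕ} (k : Fin m → Fin m → ℝ) (g : Fin n → Fin m)
    (σ : Fin n → Bool) (t : ℕ) (i : Fin m) : ℝ :=
  ∑ σ' : Fin n → Bool, iter (glauber n β k g) t σ σ' * Smag n g σ' i


section AuxLemmas
open scoped NNReal

lemma exp_sum_pos (x : ℝ) : 0 < Real.exp x + Real.exp (-x) := by positivity

lemma rp_add_rm (β s : ℝ) : rp β s + rm β s = 1 := by
  unfold rp rm
  rw [← add_div, div_self (exp_sum_pos _).ne']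

lemma rp_nonneg (β s : ℝ) : 0 ≤ rp β s := by
  unfold rp; positivity

lemma rm_nonneg (β s : ℝ) : 0 ≤ rm β s := by
  unfold rm; positivity

noncomputable def logistic (x : ℝ) : ℝ := (1 + Real.exp (-x))⁻¹

lemma rp_eq_logistic (β s : ℝ) : rp β s = logistic (2 * (β * s)) := by
  unfold rp logistic
  rw [div_eq_iff (exp_sum_pos _).ne', eq_comm, inv_mul_eq_div, div_eq_iff (by positivity)]
  have h : Real.exp (β * s) * Real.exp (-(2 * (β * s))) = Real.exp (-(β * s)) := by
    rw [← Real.exp_add]; ring_nf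
  ring_nf
  ring_nf at h
  linarith [h]

lemma logistic_hasDeriv (x : ℝ) :
    HasDerivAt logistic (Real.exp (-x) / (1 + Real.exp (-x))^2) x := by
  have h1 : HasDerivAt (fun x : ℝ => 1 + Real.exp (-x)) (-Real.exp (-x)) x := by
    simpa using ((Real.hasDerivAt_exp (-x)).comp x (hasDerivAt_neg x)).const_add 1
  have h2 := h1.inv (by positivity)
  rw [neg_neg] at h2
  exact h2

lemma logistic_mono : Monotone logistic := by
  intro a b hab
  unfold logistic
  have : Real.exp (-b) ≤ Real.exp (-a) := Real.exp_le_exp.mpr (by linarith)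
  gcongr

lemma logistic_deriv (x : ℝ) : deriv logistic x = Real.exp (-x) / (1 + Real.exp (-x))^2 :=
  (logistic_hasDeriv x).deriv

lemma logistic_lipschitz : LipschitzWith (1/4 : ℝ≥0) logistic := by
  apply lipschitzWith_of_nnnorm_deriv_le (fun x => (logistic_hasDeriv x).differentiableAt)
  intro x
  rw [← NNReal.coe_le_coe, coe_nnnorm, logistic_deriv, Real.norm_eq_abs]
  have h1 : (0:ℝ) < Real.exp (-x) := Real.exp_pos _
  have h2 : 4 * Real.exp (-x) ≤ (1 + Real.exp (-x))^2 := by nlinarith [sq_nonneg (1 - Real.exp (-x))]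
  rw [abs_of_nonneg (by positivity)]
  rw [div_le_iff₀ (by positivity)]
  have hc : ((1/4 : ℝ≥0) : ℝ) = 1/4 := by norm_num
  rw [hc]
  nlinarith

lemma rp_mono (β : ℝ) (hβ : 0 ≤ β) {s s' : ℝ} (h : s ≤ s') : rp β s ≤ rp β s' := by
  rw [rp_eq_logistic, rp_eq_logistic]
  exact logistic_mono (by nlinarith)

lemma rp_lipschitz (β : ℝ) (hβ : 0 ≤ β) {s s' : ℝ} (h : s ≤ s') :
    rp β s' - rp β s ≤ β / 2 * (s' - s) := by
  rw [rp_eq_logistic, rp_eq_logistic]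
  have := logistic_lipschitz.dist_le_mul (2*(β*s')) (2*(β*s))
  rw [Real.dist_eq, Real.dist_eq] at this
  have h2 : |2*(β*s') - 2*(β*s)| = 2*β*(s'-s) := by
    rw [abs_of_nonneg (by nlinarith)]; ring
  have h3 := le_trans (le_abs_self _) this
  rw [h2] at h3
  have hc : ((1/4 : ℝ≥0) : ℝ) = 1/4 := by norm_num
  rw [hc] at h3
  linarith


variable {m : ℕ}

lemma meanField_eq (n : ℕ) (k : Fin m → Fin m → ℝ) (g : Fin n → Fin m)
    (σ : Fin n → Bool) (v : Fin n) :
    meanField n k g σ v =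
      (∑ w, (k (g v) (g w) / n) * spin (σ w)) - (k (g v) (g v) / n) * spin (σ v) := by
  unfold meanField
  rw [Finset.filter_ne', Finset.sum_erase_eq_sub (Finset.mem_univ v)]

lemma spin_mul_self (b : Bool) : spin b * spin b = 1 := by
  cases b <;> simp [spin]

lemma Smag_update (n : ℕ) (g : Fin n → Fin m) (σ : Fin n → Bool) (v : Fin n) (b : Bool)
    (i : Fin m) :
    Smag n g (Function.update σ v b) i =
      Smag n g σ i + (1 / n) * (spin b - spin (σ v)) * (if g v = i then 1 else 0) := by
  unfold Smag
  have key : ∀ w, spin (Function.update σ v b w) =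
      spin (σ w) + (spin b - spin (σ v)) * (if w = v then 1 else 0) := by
    intro w
    rcases eq_or_ne w v with rfl | hw
    · simp [Function.update_self]
    · simp [Function.update_of_ne hw, hw]
  simp only [key]
  rw [Finset.sum_add_distrib, ← Finset.mul_sum, Finset.sum_ite_eq' (Finset.univ.filter
    fun w => g w = i) v (fun _ => (1:ℝ))]
  simp only [Finset.mem_filter, Finset.mem_univ, true_and]
  rcases eq_or_ne (g v) i with h | h <;> simp [h] <;> ring

lemma sum_group (n : ℕ) (g : Fin n → Fin m) (c : Fin m → ℝ) (x : Fin n → ℝ) :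
    ∑ w, c (g w) * x w = ∑ j, c j * ∑ w ∈ Finset.univ.filter (fun w => g w = j), x w := by
  rw [← Finset.sum_fiberwise Finset.univ g (fun w => c (g w) * x w)]
  refine Finset.sum_congr rfl fun j _ => ?_
  rw [Finset.mul_sum]
  refine Finset.sum_congr rfl fun w hw => ?_
  simp only [Finset.mem_filter] at hw
  rw [hw.2]

lemma Smag_sub (n : ℕ) (g : Fin n → Fin m) (σ σ' : Fin n → Bool) (j : Fin m) :
    Smag n g σ j - Smag n g σ' j =
      (1 / n) * ∑ w ∈ Finset.univ.filter (fun w => g w = j), (spin (σ w) - spin (σ' w)) := by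
  unfold Smag
  rw [Finset.sum_sub_distrib]
  ring

lemma Smag_sub_nonneg (n : ℕ) (g : Fin n → Fin m) {σ σ' : Fin n → Bool}
    (hle : ∀ w, spin (σ' w) ≤ spin (σ w)) (j : Fin m) :
    0 ≤ Smag n g σ j - Smag n g σ' j := by
  rw [Smag_sub]
  apply mul_nonneg (by positivity)
  exact Finset.sum_nonneg fun w _ => by linarith [hle w]

lemma meanField_mono (n : ℕ) (k : Fin m → Fin m → ℝ) (hk : ∀ i j, 0 < k i j)
    (g : Fin n → Fin m) {σ σ' : Fin n → Bool}
    (hle : ∀ w, spin (σ' w) ≤ spin (σ w)) (v : Fin n) :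
    meanField n k g σ' v ≤ meanField n k g σ v := by
  unfold meanField
  refine Finset.sum_le_sum fun w _ => ?_
  have := hle w
  have h1 : 0 ≤ k (g v) (g w) / n := div_nonneg (hk _ _).le (Nat.cast_nonneg n)
  nlinarith

lemma meanField_sub_le (n : ℕ) (k : Fin m → Fin m → ℝ) (hk : ∀ i j, 0 < k i j)
    (g : Fin n → Fin m) {σ σ' : Fin n → Bool}
    (hle : ∀ w, spin (σ' w) ≤ spin (σ w)) (v : Fin n) :
    meanField n k g σ v - meanField n k g σ' v ≤
      ∑ j, k (g v) j * (Smag n g σ j - Smag n g σ' j) := by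
  have hrhs : ∑ j, k (g v) j * (Smag n g σ j - Smag n g σ' j)
      = ∑ w, (k (g v) (g w) / n) * (spin (σ w) - spin (σ' w)) := by
    rw [sum_group n g (fun j => k (g v) j / n) (fun w => spin (σ w) - spin (σ' w))]
    refine Finset.sum_congr rfl fun j _ => ?_
    rw [Smag_sub]
    ring
  rw [hrhs, meanField_eq, meanField_eq]
  have hsub : (∑ w, k (g v) (g w) / ↑n * spin (σ w)) -
      (∑ w, k (g v) (g w) / ↑n * spin (σ' w)) =
      ∑ w, (k (g v) (g w) / n) * (spin (σ w) - spin (σ' w)) := by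
    rw [← Finset.sum_sub_distrib]
    refine Finset.sum_congr rfl fun w _ => by ring
  have hv : 0 ≤ (k (g v) (g v) / n) * (spin (σ v) - spin (σ' v)) := by
    have := hle v
    have h1 : 0 ≤ k (g v) (g v) / n := div_nonneg (hk _ _).le (Nat.cast_nonneg n)
    nlinarith
  nlinarith [hsub]

lemma glauber_exp (n : ℕ) (β : ℝ) (k : Fin m → Fin m → ℝ) (g : Fin n → Fin m)
    (σ : Fin n → Bool) (f : (Fin n → Bool) → ℝ) :
    ∑ τ, glauber n β k g σ τ * f τ =
      (1 / n) * ∑ v, (rp β (meanField n k g σ v) * f (Function.update σ v true)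
        + rm β (meanField n k g σ v) * f (Function.update σ v false)) := by
  unfold glauber
  simp only [mul_assoc, ← Finset.mul_sum]
  congr 1
  simp only [Finset.sum_mul]
  rw [Finset.sum_comm]
  refine Finset.sum_congr rfl fun v _ => ?_
  simp only [add_mul, ite_mul, zero_mul, Finset.sum_add_distrib]
  rw [Finset.sum_ite_eq' Finset.univ (Function.update σ v true)
      (fun τ => rp β (meanField n k g σ v) * f τ),
    Finset.sum_ite_eq' Finset.univ (Function.update σ v false)
      (fun τ => rm β (meanField n k g σ v) * f τ)]
  simp

lemma iter_succ' {Ω : Type*} [Fintype Ω] [DecidableEq Ω] (P : Ω → Ω → ℝ) (t : ℕ) (x y : Ω) :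
    iter P (t + 1) x y = ∑ z, P x z * iter P t z y := by
  induction t generalizing y with
  | zero =>
    simp only [iter, ite_mul, one_mul, zero_mul, mul_ite, mul_one, mul_zero]
    rw [Finset.sum_ite_eq Finset.univ x (fun z => P z y),
      Finset.sum_ite_eq' Finset.univ y (fun z => P x z)]
    simp
  | succ t ih =>
    show ∑ z, iter P (t+1) x z * P z y = _
    have : ∀ z, iter P (t+1) x z = ∑ w, P x w * iter P t w z := fun z => ih z
    simp only [this, Finset.sum_mul, mul_assoc]
    rw [Finset.sum_comm]
    refine Finset.sum_congr rfl fun w _ => ?_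
    rw [← Finset.mul_sum]
    rfl

lemma Eexp_zero (n : ℕ) (β : ℝ) (k : Fin m → Fin m → ℝ) (g : Fin n → Fin m)
    (σ : Fin n → Bool) (i : Fin m) :
    Eexp n β k g σ 0 i = Smag n g σ i := by
  unfold Eexp
  simp only [iter, ite_mul, one_mul, zero_mul]
  rw [Finset.sum_ite_eq Finset.univ σ (fun τ => Smag n g τ i)]
  simp

lemma Eexp_succ (n : ℕ) (β : ℝ) (k : Fin m → Fin m → ℝ) (g : Fin n → Fin m)
    (σ : Fin n → Bool) (t : ℕ) (i : Fin m) :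
    Eexp n β k g σ (t + 1) i = ∑ τ, glauber n β k g σ τ * Eexp n β k g τ t i := by
  unfold Eexp
  simp only [iter_succ', Finset.sum_mul, mul_assoc]
  rw [Finset.sum_comm]
  refine Finset.sum_congr rfl fun τ _ => ?_
  rw [← Finset.mul_sum]

lemma Qmat_apply (n : ℕ) (β : ℝ) (p : Fin m → ℝ) (k : Fin m → Fin m → ℝ) (i j : Fin m) :
    Qmat n β p k i j = (1 - 1 / n) * (if i = j then 1 else 0) + (β / n) * (p i * k i j) := by
  unfold Qmat
  simp [Matrix.add_apply, Matrix.smul_apply, Matrix.one_apply, smul_eq_mul]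

lemma Qmat_nonneg {p : Fin m → ℝ} {k : Fin m → Fin m → ℝ} (hp : ∀ i, 0 < p i)
    (hk : ∀ i j, 0 < k i j) {β : ℝ} (hβ : 0 ≤ β) {n : ℕ} (hn : 0 < n) (i j : Fin m) :
    0 ≤ Qmat n β p k i j := by
  rw [Qmat_apply]
  have h1 : (1:ℝ) ≤ n := by exact_mod_cast hn
  have h2 : (0:ℝ) < n := by exact_mod_cast hn
  have h3 : (1:ℝ) - 1/n ≥ 0 := by rw [ge_iff_le, sub_nonneg, div_le_one h2]; exact h1
  have h4 : 0 ≤ β / n := by positivity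
  have h5 := (hp i).le
  have h6 := (hk i j).le
  split <;> [skip; rw [mul_zero, zero_add]] <;> positivity

lemma Qmat_pow_nonneg {p : Fin m → ℝ} {k : Fin m → Fin m → ℝ} (hp : ∀ i, 0 < p i)
    (hk : ∀ i j, 0 < k i j) {β : ℝ} (hβ : 0 ≤ β) {n : ℕ} (hn : 0 < n) (t : ℕ) (i j : Fin m) :
    0 ≤ (Qmat n β p k ^ t) i j := by
  induction t generalizing i j with
  | zero =>
    rw [pow_zero]
    rw [Matrix.one_apply]
    split <;> norm_num
  | succ t ih =>
    rw [pow_succ, Matrix.mul_apply]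
    exact Finset.sum_nonneg fun l _ => mul_nonneg (ih i l) (Qmat_nonneg hp hk hβ hn l j)

lemma mulVec_eq_sum (A : Matrix (Fin m) (Fin m) ℝ) (x : Fin m → ℝ) (i : Fin m) :
    A.mulVec x i = ∑ j, A i j * x j := rfl

lemma spin_le_spin_true (b : Bool) : spin b ≤ spin true := by cases b <;> simp [spin]

lemma spin_false_le (b : Bool) : spin false ≤ spin b := by cases b <;> simp [spin]

lemma update_ord {n : ℕ} {σ σ' : Fin n → Bool} (hle : ∀ w, spin (σ' w) ≤ spin (σ w))
    (v : Fin n) (b b' : Bool) (hb : spin b' ≤ spin b) (w : Fin n) :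
    spin (Function.update σ' v b' w) ≤ spin (Function.update σ v b w) := by
  rcases eq_or_ne w v with rfl | hw
  · simpa using hb
  · simpa [Function.update_of_ne hw] using hle w

lemma step_bound (p : Fin m → ℝ) (k : Fin m → Fin m → ℝ) (hP : Params m p k)
    (β : ℝ) (hβ : 0 ≤ β) (n : ℕ) (hn : 0 < n) (g : Fin n → Fin m) (hg : IsPartition n p g)
    (t : ℕ) (i : Fin m) (σ σ' : Fin n → Bool) (hle : ∀ v, spin (σ' v) ≤ spin (σ v))
    (F : (Fin n → Bool) → ℝ)
    (hF1 : ∀ τ τ' : Fin n → Bool, (∀ v, spin (τ' v) ≤ spin (τ v)) → 0 ≤ F τ - F τ')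
    (hF2 : ∀ τ τ' : Fin n → Bool, (∀ v, spin (τ' v) ≤ spin (τ v)) →
      F τ - F τ' ≤ (Qmat n β p k ^ t).mulVec (fun j => Smag n g τ j - Smag n g τ' j) i) :
    0 ≤ (∑ τ, glauber n β k g σ τ * F τ) - (∑ τ, glauber n β k g σ' τ * F τ) ∧
    (∑ τ, glauber n β k g σ τ * F τ) - (∑ τ, glauber n β k g σ' τ * F τ) ≤
      (Qmat n β p k ^ (t+1)).mulVec (fun j => Smag n g σ j - Smag n g σ' j) i := by
  have hn' : (0:ℝ) < n := by exact_mod_cast hn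
  set d : Fin m → ℝ := fun j => Smag n g σ j - Smag n g σ' j with hd
  set Q := Qmat n β p k with hQ
  -- the per-vertex difference
  set T : Fin n → ℝ := fun v =>
    rp β (meanField n k g σ v) * F (Function.update σ v true)
    + rm β (meanField n k g σ v) * F (Function.update σ v false)
    - rp β (meanField n k g σ' v) * F (Function.update σ' v true)
    - rm β (meanField n k g σ' v) * F (Function.update σ' v false) with hT
  have hdiff : (∑ τ, glauber n β k g σ τ * F τ) - (∑ τ, glauber n β k g σ' τ * F τ)
      = (1 / n) * ∑ v, T v := by
    rw [glauber_exp, glauber_exp, ← mul_sub, ← Finset.sum_sub_distrib]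
    congr 1
    refine Finset.sum_congr rfl fun v _ => ?_
    rw [hT]
    ring
  -- ordering facts
  have hordt : ∀ v b, ∀ w, spin (Function.update σ' v b w) ≤ spin (Function.update σ v b w) :=
    fun v b w => update_ord hle v b b (le_refl _) w
  have hordm : ∀ v, ∀ w,
      spin (Function.update σ' v false w) ≤ spin (Function.update σ v true w) :=
    fun v w => update_ord hle v true false (by simp [spin]) w
  have hmf : ∀ v, meanField n k g σ' v ≤ meanField n k g σ v :=
    fun v => meanField_mono n k hP.hkpos g hle v
  have hrple : ∀ v, rp β (meanField n k g σ' v) ≤ rp β (meanField n k g σ v) :=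
    fun v => rp_mono β hβ (hmf v)
  -- the decomposition identity
  have hid : ∀ v, T v =
      rp β (meanField n k g σ' v) * (F (Function.update σ v true) - F (Function.update σ' v true))
      + rm β (meanField n k g σ v) * (F (Function.update σ v false) - F (Function.update σ' v false))
      + (rp β (meanField n k g σ v) - rp β (meanField n k g σ' v)) *
          (F (Function.update σ v true) - F (Function.update σ' v false)) := by
    intro v
    have h1 := rp_add_rm β (meanField n k g σ v)
    have h2 := rp_add_rm β (meanField n k g σ' v)
    rw [hT]
    linear_combination (F (Function.update σ' v false)) * h1
      - (F (Function.update σ' v false)) * h2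
  -- lower bound
  have hTnn : ∀ v, 0 ≤ T v := by
    intro v
    rw [hid v]
    have i1 := hF1 _ _ (hordt v true)
    have i2 := hF1 _ _ (hordt v false)
    have i3 := hF1 _ _ (hordm v)
    have c1 := rp_nonneg β (meanField n k g σ' v)
    have c2 := rm_nonneg β (meanField n k g σ v)
    have c3 := sub_nonneg.mpr (hrple v)
    have := mul_nonneg c1 i1
    have := mul_nonneg c2 i2
    have := mul_nonneg c3 i3
    linarith
  constructor
  · rw [hdiff]
    exact mul_nonneg (by positivity) (Finset.sum_nonneg fun v _ => hTnn v)
  -- upper bound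
  rw [hdiff]
  set χ : Fin n → Fin m → ℝ := fun v j => if g v = j then 1 else 0 with hχ
  set A : Fin n → Fin m → ℝ := fun v j =>
    d j - (1 / n) * (spin (σ v) - spin (σ' v)) * χ v j with hA
  set K : Fin m → ℝ := fun i' => ∑ l, k i' l * d l with hK
  set U : Fin n → ℝ := fun v =>
    (Q ^ t).mulVec (A v) i + (β / n) * K (g v) * ((Q ^ t).mulVec (χ v) i) with hU
  have hχnn : ∀ v j, 0 ≤ χ v j := by intro v j; rw [hχ]; dsimp; split <;> norm_num
  have hQpow : ∀ j, 0 ≤ (Q ^ t) i j :=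
    fun j => Qmat_pow_nonneg hP.hp hP.hkpos hβ hn t i j
  have hQχ : ∀ v, 0 ≤ (Q ^ t).mulVec (χ v) i := by
    intro v
    rw [mulVec_eq_sum]
    exact Finset.sum_nonneg fun j _ => mul_nonneg (hQpow j) (hχnn v j)
  have hTU : ∀ v, T v ≤ U v := by
    intro v
    rw [hid v]
    -- the three Smag-difference vectors
    have hv1 : (fun j => Smag n g (Function.update σ v true) j
        - Smag n g (Function.update σ' v true) j) = A v := by
      funext j
      rw [Smag_update, Smag_update, hA]
      dsimp
      rw [hχ]
      ring
    have hv2 : (fun j => Smag n g (Function.update σ v false) j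
        - Smag n g (Function.update σ' v false) j) = A v := by
      funext j
      rw [Smag_update, Smag_update, hA]
      dsimp
      rw [hχ]
      ring
    have hv3 : (fun j => Smag n g (Function.update σ v true) j
        - Smag n g (Function.update σ' v false) j) = fun j => A v j + (2 / n) * χ v j := by
      funext j
      rw [Smag_update, Smag_update, hA]
      dsimp
      rw [hχ]
      have h1 : spin true = 1 := rfl
      have h2 : spin false = -1 := rfl
      rw [h1, h2]
      rcases eq_or_ne (g v) j with h | h <;> simp [h] <;> ring
    have i1 := hF2 _ _ (hordt v true)
    have i2 := hF2 _ _ (hordt v false)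
    have i3 := hF2 _ _ (hordm v)
    rw [hv1] at i1
    rw [hv2] at i2
    rw [hv3] at i3
    have hmvC : (Q ^ t).mulVec (fun j => A v j + (2 / n) * χ v j) i
        = (Q ^ t).mulVec (A v) i + (2 / n) * ((Q ^ t).mulVec (χ v) i) := by
      simp only [mulVec_eq_sum, Finset.mul_sum, ← Finset.sum_add_distrib]
      refine Finset.sum_congr rfl fun j _ => by ring
    rw [hmvC] at i3
    -- coefficients
    have c1 := rp_nonneg β (meanField n k g σ' v)
    have c2 := rm_nonneg β (meanField n k g σ v)
    have c3 := sub_nonneg.mpr (hrple v)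
    have e1 := mul_le_mul_of_nonneg_left i1 c1
    have e2 := mul_le_mul_of_nonneg_left i2 c2
    have e3 := mul_le_mul_of_nonneg_left i3 c3
    -- bound on the rp increment
    have hrpL := rp_lipschitz β hβ (hmf v)
    have hmfd := meanField_sub_le n k hP.hkpos g hle v
    have hDK : rp β (meanField n k g σ v) - rp β (meanField n k g σ' v)
        ≤ (β / 2) * K (g v) := by
      rw [hK]
      calc rp β (meanField n k g σ v) - rp β (meanField n k g σ' v)
          ≤ β / 2 * (meanField n k g σ v - meanField n k g σ' v) := hrpL
        _ ≤ β / 2 * ∑ l, k (g v) l * d l := by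
            apply mul_le_mul_of_nonneg_left _ (by positivity)
            exact hmfd
    have hfin : (rp β (meanField n k g σ v) - rp β (meanField n k g σ' v)) *
        ((2 / n) * ((Q ^ t).mulVec (χ v) i))
        ≤ (β / n) * K (g v) * ((Q ^ t).mulVec (χ v) i) := by
      have h2n : (0:ℝ) ≤ 2 / n := by positivity
      have := mul_le_mul_of_nonneg_right hDK (mul_nonneg h2n (hQχ v))
      calc (rp β (meanField n k g σ v) - rp β (meanField n k g σ' v)) *
          ((2 / n) * ((Q ^ t).mulVec (χ v) i))
          ≤ (β / 2) * K (g v) * ((2 / n) * ((Q ^ t).mulVec (χ v) i)) := by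
            exact mul_le_mul_of_nonneg_right hDK (mul_nonneg h2n (hQχ v))
        _ = (β / n) * K (g v) * ((Q ^ t).mulVec (χ v) i) := by
            field_simp
    have hsum1 : rp β (meanField n k g σ' v) + rm β (meanField n k g σ v)
        + (rp β (meanField n k g σ v) - rp β (meanField n k g σ' v)) = 1 := by
      have h1 := rp_add_rm β (meanField n k g σ v)
      linarith
    rw [hU]
    dsimp only
    have hkey : rp β (meanField n k g σ' v) * ((Q ^ t).mulVec (A v) i)
        + rm β (meanField n k g σ v) * ((Q ^ t).mulVec (A v) i)
        + (rp β (meanField n k g σ v) - rp β (meanField n k g σ' v)) *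
            ((Q ^ t).mulVec (A v) i + (2 / n) * ((Q ^ t).mulVec (χ v) i))
        = (Q ^ t).mulVec (A v) i
          + (rp β (meanField n k g σ v) - rp β (meanField n k g σ' v)) *
              ((2 / n) * ((Q ^ t).mulVec (χ v) i)) := by
      linear_combination ((Q ^ t).mulVec (A v) i) * hsum1
    linarith [e1, e2, e3, hfin, hkey]
  -- summing up
  have hZ : ∀ j, (1 / (n:ℝ)) * (∑ v, (A v j + (β / n) * K (g v) * χ v j))
      = Q.mulVec d j := by
    intro j
    have hcard : ((Finset.univ.filter fun v => g v = j).card : ℝ) = n * p j := hg.2 j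
    have hs1 : ∑ _v : Fin n, d j = n * d j := by
      rw [Finset.sum_const, Finset.card_univ, Fintype.card_fin, nsmul_eq_mul]
    have hs2 : ∑ v, (1 / (n:ℝ)) * (spin (σ v) - spin (σ' v)) * χ v j = d j := by
      rw [hχ]
      dsimp only
      simp only [mul_ite, mul_one, mul_zero]
      rw [← Finset.sum_filter, ← Finset.mul_sum, hd]
      dsimp only
      rw [Smag_sub]
    have hs3 : ∑ v, (β / (n:ℝ)) * K (g v) * χ v j = (β / n) * K j * (n * p j) := by
      rw [hχ]
      dsimp only
      simp only [mul_ite, mul_one, mul_zero]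
      rw [← Finset.sum_filter]
      have hcg : ∀ v ∈ Finset.univ.filter (fun v => g v = j),
          β / (n:ℝ) * K (g v) = β / n * K j := by
        intro v hv
        simp only [Finset.mem_filter] at hv
        rw [hv.2]
      rw [Finset.sum_congr rfl hcg, Finset.sum_const, nsmul_eq_mul, hcard]
      ring
    have hsplit : ∑ v, (A v j + (β / n) * K (g v) * χ v j)
        = (∑ _v : Fin n, d j) - (∑ v, (1 / (n:ℝ)) * (spin (σ v) - spin (σ' v)) * χ v j)
          + ∑ v, (β / (n:ℝ)) * K (g v) * χ v j := by
      rw [hA]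
      dsimp only
      rw [Finset.sum_add_distrib, Finset.sum_sub_distrib]
    have hQd : Q.mulVec d j = (1 - 1 / (n:ℝ)) * d j + (β / n) * p j * K j := by
      rw [mulVec_eq_sum, hQ]
      simp only [Qmat_apply, add_mul]
      rw [Finset.sum_add_distrib]
      congr 1
      · simp only [mul_ite, ite_mul, mul_one, mul_zero, one_mul, zero_mul]
        rw [Finset.sum_ite_eq Finset.univ j (fun l => (1 - 1 / (n:ℝ)) * d l)]
        simp
      · rw [hK]
        dsimp only
        rw [Finset.mul_sum]
        exact Finset.sum_congr rfl fun l _ => by ring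
    rw [hsplit, hs1, hs2, hs3, hQd]
    field_simp
  have hexpU : ∀ v, U v = ∑ j, (Q ^ t) i j * (A v j + (β / n) * K (g v) * χ v j) := by
    intro v
    rw [hU]
    dsimp only
    simp only [mulVec_eq_sum, Finset.mul_sum, ← Finset.sum_add_distrib]
    exact Finset.sum_congr rfl fun j _ => by ring
  have hsumU : (1 / (n:ℝ)) * ∑ v, U v = (Q ^ (t+1)).mulVec d i := by
    simp only [hexpU]
    rw [Finset.sum_comm]
    have hpow : (Q ^ (t+1)).mulVec d i = ∑ j, (Q ^ t) i j * (Q.mulVec d j) := by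
      rw [pow_succ, ← Matrix.mulVec_mulVec, mulVec_eq_sum]
    rw [hpow, Finset.mul_sum]
    refine Finset.sum_congr rfl fun j _ => ?_
    rw [← hZ j, ← Finset.mul_sum]
    ring
  calc (1 / (n:ℝ)) * ∑ v, T v ≤ (1 / n) * ∑ v, U v := by
        apply mul_le_mul_of_nonneg_left _ (by positivity)
        exact Finset.sum_le_sum fun v _ => hTU v
    _ = (Q ^ (t+1)).mulVec d i := hsumU

lemma key_pointwise (p : Fin m → ℝ) (k : Fin m → Fin m → ℝ) (hP : Params m p k)
    (β : ℝ) (hβ : 0 ≤ β) (n : ℕ) (hn : 0 < n) (g : Fin n → Fin m) (hg : IsPartition n p g) :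
    ∀ t : ℕ, ∀ σ σ' : Fin n → Bool, (∀ v, spin (σ' v) ≤ spin (σ v)) → ∀ i : Fin m,
      0 ≤ Eexp n β k g σ t i - Eexp n β k g σ' t i ∧
      Eexp n β k g σ t i - Eexp n β k g σ' t i ≤
        (Qmat n β p k ^ t).mulVec (fun j => Smag n g σ j - Smag n g σ' j) i := by
  intro t
  induction t with
  | zero =>
    intro σ σ' hle i
    rw [Eexp_zero, Eexp_zero, pow_zero, Matrix.one_mulVec]
    exact ⟨Smag_sub_nonneg n g hle i, le_refl _⟩
  | succ t ih =>
    intro σ σ' hle i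
    have h := step_bound p k hP β hβ n hn g hg t i σ σ' hle (fun τ => Eexp n β k g τ t i)
      (fun τ τ' hh => (ih τ τ' hh i).1) (fun τ τ' hh => (ih τ τ' hh i).2)
    rw [Eexp_succ, Eexp_succ]
    exact h

lemma comp_inj_eq {n : ℕ} {α : Type*} (prm : Equiv.Perm (Fin n)) (τ ρ : Fin n → α) :
    (τ ∘ prm = ρ ∘ prm) ↔ (τ = ρ) := by
  refine ⟨fun h => ?_, fun h => by rw [h]⟩
  funext x
  have := congrFun h (prm.symm x)
  simpa using this

lemma update_comp {n : ℕ} (σ : Fin n → Bool) (prm : Equiv.Perm (Fin n)) (v : Fin n) (b : Bool) :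
    Function.update (σ ∘ prm) v b = (Function.update σ (prm v) b) ∘ prm := by
  funext u
  rcases eq_or_ne u v with rfl | hu
  · simp
  · have h2 : prm u ≠ prm v := fun h => hu (prm.injective h)
    simp [Function.update_of_ne hu, Function.update_of_ne h2, Function.comp]

lemma meanField_comp {n : ℕ} (k : Fin m → Fin m → ℝ) (g : Fin n → Fin m)
    (prm : Equiv.Perm (Fin n)) (hgprm : ∀ v, g (prm v) = g v) (σ : Fin n → Bool) (v : Fin n) :
    meanField n k g (σ ∘ prm) v = meanField n k g σ (prm v) := by
  rw [meanField_eq, meanField_eq]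
  congr 1
  · rw [← Equiv.sum_comp prm (fun w => (k (g (prm v)) (g w) / n) * spin (σ w))]
    refine Finset.sum_congr rfl fun w _ => ?_
    rw [hgprm v, hgprm w]
    rfl
  · rw [hgprm v]
    rfl

lemma glauber_comp {n : ℕ} (β : ℝ) (k : Fin m → Fin m → ℝ) (g : Fin n → Fin m)
    (prm : Equiv.Perm (Fin n)) (hgprm : ∀ v, g (prm v) = g v) (σ τ : Fin n → Bool) :
    glauber n β k g (σ ∘ prm) (τ ∘ prm) = glauber n β k g σ τ := by
  unfold glauber
  congr 1
  rw [← Equiv.sum_comp prm (fun v =>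
    (if τ = Function.update σ v true then rp β (meanField n k g σ v) else 0)
    + (if τ = Function.update σ v false then rm β (meanField n k g σ v) else 0))]
  refine Finset.sum_congr rfl fun v _ => ?_
  rw [update_comp, update_comp, meanField_comp k g prm hgprm]
  simp only [comp_inj_eq]

lemma iter_comp {n : ℕ} (β : ℝ) (k : Fin m → Fin m → ℝ) (g : Fin n → Fin m)
    (prm : Equiv.Perm (Fin n)) (hgprm : ∀ v, g (prm v) = g v) :
    ∀ t : ℕ, ∀ σ τ : Fin n → Bool,
      iter (glauber n β k g) t (σ ∘ prm) (τ ∘ prm) = iter (glauber n β k g) t σ τ := by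
  intro t
  induction t with
  | zero =>
    intro σ τ
    show (if σ ∘ prm = τ ∘ prm then (1:ℝ) else 0) = (if σ = τ then 1 else 0)
    simp only [comp_inj_eq]
  | succ t ih =>
    intro σ τ
    show (∑ z, iter (glauber n β k g) t (σ ∘ prm) z * glauber n β k g z (τ ∘ prm)) = _
    rw [← Equiv.sum_comp (Equiv.arrowCongr prm.symm (Equiv.refl Bool))
      (fun z => iter (glauber n β k g) t (σ ∘ prm) z * glauber n β k g z (τ ∘ prm))]
    refine Finset.sum_congr rfl fun z _ => ?_
    have hEz : (Equiv.arrowCongr prm.symm (Equiv.refl Bool)) z = z ∘ prm := rfl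
    rw [hEz, ih, glauber_comp β k g prm hgprm]

lemma Smag_comp {n : ℕ} (g : Fin n → Fin m) (prm : Equiv.Perm (Fin n))
    (hgprm : ∀ v, g (prm v) = g v) (σ : Fin n → Bool) (i : Fin m) :
    Smag n g (σ ∘ prm) i = Smag n g σ i := by
  unfold Smag
  congr 1
  rw [Finset.sum_filter, Finset.sum_filter,
    ← Equiv.sum_comp prm (fun v => if g v = i then spin (σ v) else 0)]
  refine Finset.sum_congr rfl fun v _ => ?_
  rw [hgprm v]
  rfl

lemma Eexp_comp {n : ℕ} (β : ℝ) (k : Fin m → Fin m → ℝ) (g : Fin n → Fin m)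
    (prm : Equiv.Perm (Fin n)) (hgprm : ∀ v, g (prm v) = g v) (σ : Fin n → Bool) (t : ℕ) (i : Fin m) :
    Eexp n β k g (σ ∘ prm) t i = Eexp n β k g σ t i := by
  unfold Eexp
  rw [← Equiv.sum_comp (Equiv.arrowCongr prm.symm (Equiv.refl Bool))
    (fun τ => iter (glauber n β k g) t (σ ∘ prm) τ * Smag n g τ i)]
  refine Finset.sum_congr rfl fun τ _ => ?_
  have hEτ : (Equiv.arrowCongr prm.symm (Equiv.refl Bool)) τ = τ ∘ prm := rfl
  rw [hEτ, iter_comp β k g prm hgprm, Smag_comp g prm hgprm]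

lemma exists_perm {n : ℕ} (g : Fin n → Fin m) (σ' σ'' : Fin n → Bool)
    (hcount : ∀ (i : Fin m) (b : Bool),
      (Finset.univ.filter fun v => g v = i ∧ σ'' v = b).card =
      (Finset.univ.filter fun v => g v = i ∧ σ' v = b).card) :
    ∃ prm : Equiv.Perm (Fin n), (∀ v, g (prm v) = g v) ∧ ∀ v, σ' (prm v) = σ'' v := by
  classical
  set h' : Fin n → Fin m × Bool := fun v => (g v, σ' v) with hh'
  set h'' : Fin n → Fin m × Bool := fun v => (g v, σ'' v) with hh''
  have hfib : ∀ c : Fin m × Bool,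
      Fintype.card {v // h'' v = c} = Fintype.card {v // h' v = c} := by
    intro c
    rw [Fintype.card_subtype, Fintype.card_subtype]
    have e1 : ∀ v, (h'' v = c) ↔ (g v = c.1 ∧ σ'' v = c.2) := by
      intro v; rw [hh'']; exact Prod.ext_iff
    have e2 : ∀ v, (h' v = c) ↔ (g v = c.1 ∧ σ' v = c.2) := by
      intro v; rw [hh']; exact Prod.ext_iff
    rw [Finset.filter_congr (fun v _ => e1 v), Finset.filter_congr (fun v _ => e2 v)]
    exact hcount c.1 c.2
  have e : ∀ c, {v // h'' v = c} ≃ {v // h' v = c} := fun c => Fintype.equivOfCardEq (hfib c)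
  refine ⟨(Equiv.sigmaFiberEquiv h'').symm.trans
    ((Equiv.sigmaCongrRight e).trans (Equiv.sigmaFiberEquiv h')), ?_, ?_⟩ <;>
  · intro v
    have hprmv : ((Equiv.sigmaFiberEquiv h'').symm.trans
        ((Equiv.sigmaCongrRight e).trans (Equiv.sigmaFiberEquiv h'))) v
        = (e (h'' v) ⟨v, rfl⟩).val := rfl
    have hval := (e (h'' v) ⟨v, rfl⟩).2
    rw [hprmv]
    first
    | exact congrArg Prod.fst hval
    | exact congrArg Prod.snd hval

lemma count_split {n : ℕ} (g : Fin n → Fin m) (σ : Fin n → Bool) (i : Fin m) :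
    (Finset.univ.filter fun v => g v = i ∧ σ v = true).card
      + (Finset.univ.filter fun v => g v = i ∧ σ v = false).card
      = (Finset.univ.filter fun v => g v = i).card := by
  classical
  have h := Finset.card_filter_add_card_filter_not
    (s := Finset.univ.filter fun v => g v = i) (p := fun v => σ v = true)
  rw [Finset.filter_filter, Finset.filter_filter] at h
  rw [← h]
  congr 2
  apply Finset.filter_congr
  intro v _
  simp [Bool.not_eq_true]

lemma sum_spin_filter {n : ℕ} (g : Fin n → Fin m) (σ : Fin n → Bool) (i : Fin m) :
    ∑ v ∈ Finset.univ.filter (fun v => g v = i), spin (σ v)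
      = 2 * ((Finset.univ.filter fun v => g v = i ∧ σ v = true).card : ℝ)
        - ((Finset.univ.filter fun v => g v = i).card : ℝ) := by
  classical
  rw [← Finset.sum_filter_add_sum_filter_not
    (Finset.univ.filter fun v => g v = i) (fun v => σ v = true)]
  rw [Finset.filter_filter, Finset.filter_filter]
  have h1 : ∀ v ∈ Finset.univ.filter (fun v => g v = i ∧ σ v = true), spin (σ v) = 1 := by
    intro v hv
    simp only [Finset.mem_filter] at hv
    rw [hv.2.2]
    rfl
  have h2 : ∀ v ∈ Finset.univ.filter (fun v => g v = i ∧ ¬σ v = true), spin (σ v) = -1 := by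
    intro v hv
    simp only [Finset.mem_filter, Bool.not_eq_true] at hv
    rw [hv.2.2]
    rfl
  rw [Finset.sum_congr rfl h1, Finset.sum_congr rfl h2, Finset.sum_const, Finset.sum_const]
  have hsplit := count_split g σ i
  have hneg : (Finset.univ.filter fun v => g v = i ∧ ¬σ v = true)
      = (Finset.univ.filter fun v => g v = i ∧ σ v = false) := by
    apply Finset.filter_congr
    intro v _
    simp [Bool.not_eq_true]
  rw [hneg]
  have := congrArg (fun x : ℕ => (x : ℝ)) hsplit
  push_cast at this ⊢
  simp only [nsmul_eq_mul, mul_one, mul_neg_one]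
  linarith

lemma count_le {n : ℕ} (hn : 0 < n) (g : Fin n → Fin m) (σ σ' : Fin n → Bool) (i : Fin m)
    (hle : Smag n g σ' i ≤ Smag n g σ i) :
    (Finset.univ.filter fun v => g v = i ∧ σ' v = true).card
      ≤ (Finset.univ.filter fun v => g v = i ∧ σ v = true).card := by
  have hn' : (0:ℝ) < n := by exact_mod_cast hn
  unfold Smag at hle
  rw [sum_spin_filter, sum_spin_filter] at hle
  have h1 : (0:ℝ) < 1 / n := by positivity
  rw [← Nat.cast_le (α := ℝ)]
  nlinarith [hle]

end AuxLemmas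

/-- for componentwise ordered starting magnetizations `s ≥ s'`, the
difference of expected magnetizations is nonnegative and bounded by `Q^t (s - s')`
componentwise. -/
theorem magnetization_expectation_contraction
    (m : ℕ) (p : Fin m → ℝ) (k : Fin m → Fin m → ℝ)
    (hP : Params m p k)
    (β : ℝ) (hβ : 0 ≤ β)
    (n : ℕ) (hn : 0 < n) (g : Fin n → Fin m) (hg : IsPartition n p g) :
    ∀ σ σ' : Fin n → Bool, (∀ i, Smag n g σ' i ≤ Smag n g σ i) →
      ∀ t : ℕ, ∀ i : Fin m,
        0 ≤ Eexp n β k g σ t i - Eexp n β k g σ' t i ∧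
        Eexp n β k g σ t i - Eexp n β k g σ' t i ≤
          (Qmat n β p k ^ t).mulVec (fun j => Smag n g σ j - Smag n g σ' j) i := by
  classical
  intro σ σ' hle t i
  -- build a pointwise-dominated representative σ'' of σ'
  have hcle : ∀ i : Fin m, (Finset.univ.filter fun v => g v = i ∧ σ' v = true).card
      ≤ (Finset.univ.filter fun v => g v = i ∧ σ v = true).card :=
    fun i => count_le hn g σ σ' i (hle i)
  have hex : ∀ i : Fin m, ∃ T ⊆ (Finset.univ.filter fun v => g v = i ∧ σ v = true),
      T.card = (Finset.univ.filter fun v => g v = i ∧ σ' v = true).card :=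
    fun i => Finset.exists_subset_card_eq (hcle i)
  choose T hTsub hTcard using hex
  set σ'' : Fin n → Bool := fun v => decide (v ∈ T (g v)) with hσ''
  have hmemT : ∀ v, σ'' v = true ↔ v ∈ T (g v) := by
    intro v
    rw [hσ'']
    exact decide_eq_true_iff
  have hle'' : ∀ v, spin (σ'' v) ≤ spin (σ v) := by
    intro v
    cases h : σ'' v with
    | false => exact spin_false_le _
    | true =>
      have hv := hTsub (g v) ((hmemT v).mp h)
      simp only [Finset.mem_filter] at hv
      rw [hv.2.2]
  have htrue : ∀ i : Fin m, (Finset.univ.filter fun v => g v = i ∧ σ'' v = true).card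
      = (Finset.univ.filter fun v => g v = i ∧ σ' v = true).card := by
    intro i
    rw [← hTcard i]
    congr 1
    ext v
    simp only [Finset.mem_filter, Finset.mem_univ, true_and]
    constructor
    · rintro ⟨hgv, hv⟩
      have := (hmemT v).mp hv
      rwa [hgv] at this
    · intro hv
      have hv2 := hTsub i hv
      simp only [Finset.mem_filter] at hv2
      refine ⟨hv2.2.1, (hmemT v).mpr ?_⟩
      rw [hv2.2.1]
      exact hv
  have hcount : ∀ (i : Fin m) (b : Bool),
      (Finset.univ.filter fun v => g v = i ∧ σ'' v = b).card =
      (Finset.univ.filter fun v => g v = i ∧ σ' v = b).card := by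
    intro i b
    cases b with
    | true => exact htrue i
    | false =>
      have h1 := count_split g σ'' i
      have h2 := count_split g σ' i
      have h3 := htrue i
      omega
  obtain ⟨prm, hg1, hg2⟩ := exists_perm g σ' σ'' hcount
  have hcomp : σ' ∘ prm = σ'' := funext hg2
  have hE : Eexp n β k g σ'' t i = Eexp n β k g σ' t i := by
    rw [← hcomp, Eexp_comp β k g prm hg1]
  have hS : ∀ j, Smag n g σ'' j = Smag n g σ' j := by
    intro j
    rw [← hcomp, Smag_comp g prm hg1]
  obtain ⟨hl, hu⟩ := key_pointwise p k hP β hβ n hn g hg t σ σ'' hle'' i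
  rw [hE] at hl hu
  have hvec : (fun j => Smag n g σ j - Smag n g σ'' j)
      = (fun j => Smag n g σ j - Smag n g σ' j) := by
    funext j
    rw [hS j]
  rw [hvec] at hu
  exact ⟨hl, hu⟩

end MultiIsing
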